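/- For every r ∈ (0, ∞) with r ∉ {R₁, R₂}, the function f is twice differentiable at r with f''(r) = −h'(r) f'(r) − (ξ/4)·𝟙(r < R₁) − (β/4) Φ(r)·𝟙(r < R₂), where h'(r) = σ⁻² ( r κ(r)/2 + α M ). In particular f''(r) ≤ 0 at all such r, and f is concave on [0, ∞). -/

import Mathlib

open MeasureTheory intervalIntegral Set

lemma aux_primitive_contOn (u : ℝ → ℝ)
    (hu : ∀ b : ℝ, 0 ≤ b → IntervalIntegrable u volume 0 b) :
    ContinuousOn (fun x => ∫ s in (0:ℝ)..x, u s) (Set.Ici 0) := by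
  intro x hx
  have hx0 : (0:ℝ) ≤ x := hx
  have h1 : IntervalIntegrable u volume 0 (x + 1) := hu _ (by linarith)
  have h2 : ContinuousOn (fun b => ∫ s in (0:ℝ)..b, u s) (Set.uIcc 0 (x + 1)) :=
    intervalIntegral.continuousOn_primitive_interval' h1 Set.left_mem_uIcc
  have huIcc : Set.uIcc (0:ℝ) (x + 1) = Set.Icc 0 (x + 1) := Set.uIcc_of_le (by linarith)
  have hmem : Set.Icc (0:ℝ) (x + 1) ∈ nhdsWithin x (Set.Ici 0) := by
    rw [← Set.Ici_inter_Iic]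
    exact Filter.inter_mem self_mem_nhdsWithin
      (mem_nhdsWithin_of_mem_nhds (Iic_mem_nhds (by linarith)))
  have h3 : ContinuousWithinAt (fun b => ∫ s in (0:ℝ)..b, u s) (Set.Icc 0 (x + 1)) x := by
    rw [← huIcc]; exact h2 x (by rw [huIcc]; exact ⟨hx0, by linarith⟩)
  exact h3.mono_of_mem_nhdsWithin hmem

lemma aux_ftc (u : ℝ → ℝ) (hu : ContinuousOn u (Set.Ici 0)) {r : ℝ} (hr : 0 < r) :
    HasDerivAt (fun x => ∫ s in (0:ℝ)..x, u s) (u r) r := by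
  have hIci : Set.Ici (0:ℝ) ∈ nhds r :=
    Filter.mem_of_superset (isOpen_Ioi.mem_nhds hr) Set.Ioi_subset_Ici_self
  refine intervalIntegral.integral_hasDerivAt_right
    ((hu.mono ?_).intervalIntegrable) ⟨Set.Ici 0, hIci, hu.aestronglyMeasurable measurableSet_Ici⟩
    (hu.continuousAt hIci)
  rw [Set.uIcc_of_le hr.le]
  exact Set.Icc_subset_Ici_self

lemma aux_mono (u : ℝ → ℝ)
    (hu : ∀ b : ℝ, 0 ≤ b → IntervalIntegrable u volume 0 b)
    (hpos : ∀ s : ℝ, 0 < s → 0 ≤ u s) {a b : ℝ} (ha : 0 ≤ a) (hab : a ≤ b) :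
    (∫ s in (0:ℝ)..a, u s) ≤ ∫ s in (0:ℝ)..b, u s := by
  refine intervalIntegral.integral_mono_interval le_rfl ha hab ?_ (hu b (ha.trans hab))
  rw [Filter.EventuallyLE, ae_restrict_iff' measurableSet_Ioc]
  exact Filter.Eventually.of_forall fun s hs => hpos s hs.1

set_option maxHeartbeats 1000000 in
theorem stmt_4 (σ α M R₁ R₂ ξ β : ℝ) (κ h φ Φ g f : ℝ → ℝ)
    (hσ : 0 < σ) (hα : 0 ≤ α) (hM : 0 < M)
    (hR₁ : 0 < R₁) (hR₁₂ : R₁ ≤ R₂)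
    (hκ_cont : ContinuousOn κ (Set.Ioi (0 : ℝ)))
    (hκ_nonneg : ∀ r : ℝ, 0 < r → 0 ≤ κ r)
    (hκ_int : IntervalIntegrable (fun s => s * κ s) volume 0 1)
    (hh : ∀ r, h r = (σ ^ 2)⁻¹ * ((1 / 2) * (∫ s in (0:ℝ)..r, s * κ s) + α * M * r))
    (hφ : ∀ r, φ r = Real.exp (-h r))
    (hΦ : ∀ r, Φ r = ∫ s in (0:ℝ)..r, φ s)
    (hξ : ξ = (∫ s in (0:ℝ)..R₁, (φ s)⁻¹)⁻¹)
    (hβ : β = (∫ s in (0:ℝ)..R₂, Φ s / φ s)⁻¹)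
    (hg : ∀ r, g r = 1 - (ξ / 4) * (∫ s in (0:ℝ)..(min r R₁), (φ s)⁻¹)
      - (β / 4) * (∫ s in (0:ℝ)..(min r R₂), Φ s / φ s))
    (hf : ∀ r, f r = ∫ s in (0:ℝ)..(min r R₂), φ s * g s) :
    (∀ r : ℝ, 0 < r → r ≠ R₁ → r ≠ R₂ →
      DifferentiableAt ℝ f r ∧
      HasDerivAt (deriv f)
        (-((σ ^ 2)⁻¹ * (r * κ r / 2 + α * M)) * deriv f r
          - (ξ / 4) * (if r < R₁ then (1:ℝ) else 0)
          - (β / 4) * Φ r * (if r < R₂ then (1:ℝ) else 0)) r ∧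
      -((σ ^ 2)⁻¹ * (r * κ r / 2 + α * M)) * deriv f r
          - (ξ / 4) * (if r < R₁ then (1:ℝ) else 0)
          - (β / 4) * Φ r * (if r < R₂ then (1:ℝ) else 0) ≤ 0) ∧
    ConcaveOn ℝ (Set.Ici (0 : ℝ)) f := by
  have hR₂ : 0 < R₂ := lt_of_lt_of_le hR₁ hR₁₂
  have hσ2 : (0:ℝ) < σ ^ 2 := by positivity
  have hφpos : ∀ s, 0 < φ s := fun s => by rw [hφ]; exact Real.exp_pos _
  -- integrand s * κ s
  have hsk_cont : ContinuousOn (fun s => s * κ s) (Set.Ioi 0) :=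
    continuousOn_id.mul hκ_cont
  have hsk_int : ∀ b : ℝ, 0 ≤ b → IntervalIntegrable (fun s => s * κ s) volume 0 b := by
    intro b hb
    rcases le_total b 1 with h1 | h1
    · exact hκ_int.mono_set
        (Set.uIcc_subset_uIcc Set.left_mem_uIcc
          (by rw [Set.uIcc_of_le (zero_le_one)]; exact ⟨hb, h1⟩))
    · refine hκ_int.trans ((hsk_cont.mono ?_).intervalIntegrable)
      rw [Set.uIcc_of_le h1]
      exact fun x hx => lt_of_lt_of_le one_pos hx.1
  have hsk_nonneg : ∀ s : ℝ, 0 < s → 0 ≤ s * κ s :=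
    fun s hs => mul_nonneg hs.le (hκ_nonneg s hs)
  -- continuity of h and φ on Ici 0
  have hP_cont : ContinuousOn (fun r => ∫ s in (0:ℝ)..r, s * κ s) (Set.Ici 0) :=
    aux_primitive_contOn _ hsk_int
  have hheq : h = fun r => (σ ^ 2)⁻¹ * ((1 / 2) * (∫ s in (0:ℝ)..r, s * κ s) + α * M * r) :=
    funext hh
  have hh_cont : ContinuousOn h (Set.Ici 0) := by
    rw [hheq]
    exact (continuousOn_const.mul ((continuousOn_const.mul hP_cont).add
      (continuousOn_const.mul continuousOn_id)))
  have hφeq : φ = fun r => Real.exp (-h r) := funext hφ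
  have hφ_cont : ContinuousOn φ (Set.Ici 0) := by
    rw [hφeq]; exact Real.continuous_exp.comp_continuousOn hh_cont.neg
  have hφ_int : ∀ b : ℝ, 0 ≤ b → IntervalIntegrable φ volume 0 b := by
    intro b hb
    refine (hφ_cont.mono ?_).intervalIntegrable
    rw [Set.uIcc_of_le hb]; exact Set.Icc_subset_Ici_self
  -- Φ
  have hΦeq : Φ = fun r => ∫ s in (0:ℝ)..r, φ s := funext hΦ
  have hΦ_cont : ContinuousOn Φ (Set.Ici 0) := by
    rw [hΦeq]; exact aux_primitive_contOn _ hφ_int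
  have hΦ_nonneg : ∀ r : ℝ, 0 ≤ r → 0 ≤ Φ r := by
    intro r hr
    rw [hΦ]
    exact intervalIntegral.integral_nonneg hr fun u _ => (hφpos u).le
  have hΦ_pos : ∀ r : ℝ, 0 < r → 0 < Φ r := by
    intro r hr
    rw [hΦ]
    exact intervalIntegral_pos_of_pos_on (hφ_int r hr.le) (fun x _ => hφpos x) hr
  -- integrands for g
  have hinv_cont : ContinuousOn (fun s => (φ s)⁻¹) (Set.Ici 0) :=
    hφ_cont.inv₀ fun s _ => (hφpos s).ne'
  have hΦφ_cont : ContinuousOn (fun s => Φ s / φ s) (Set.Ici 0) :=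
    hΦ_cont.div hφ_cont fun s _ => (hφpos s).ne'
  have hinv_int : ∀ b : ℝ, 0 ≤ b → IntervalIntegrable (fun s => (φ s)⁻¹) volume 0 b := by
    intro b hb
    refine (hinv_cont.mono ?_).intervalIntegrable
    rw [Set.uIcc_of_le hb]; exact Set.Icc_subset_Ici_self
  have hΦφ_int : ∀ b : ℝ, 0 ≤ b → IntervalIntegrable (fun s => Φ s / φ s) volume 0 b := by
    intro b hb
    refine (hΦφ_cont.mono ?_).intervalIntegrable
    rw [Set.uIcc_of_le hb]; exact Set.Icc_subset_Ici_self
  have hinv_nonneg : ∀ s : ℝ, 0 < s → 0 ≤ (φ s)⁻¹ := fun s _ => (inv_pos.mpr (hφpos s)).le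
  have hΦφ_nonneg : ∀ s : ℝ, 0 < s → 0 ≤ Φ s / φ s :=
    fun s hs => div_nonneg (hΦ_nonneg s hs.le) (hφpos s).le
  -- positivity of ξ and β
  have hI₁_pos : 0 < ∫ s in (0:ℝ)..R₁, (φ s)⁻¹ :=
    intervalIntegral_pos_of_pos_on (hinv_int R₁ hR₁.le)
      (fun x _ => inv_pos.mpr (hφpos x)) hR₁
  have hI₂_pos : 0 < ∫ s in (0:ℝ)..R₂, Φ s / φ s :=
    intervalIntegral_pos_of_pos_on (hΦφ_int R₂ hR₂.le)
      (fun x hx => div_pos (hΦ_pos x hx.1) (hφpos x)) hR₂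
  have hξ_pos : 0 < ξ := by rw [hξ]; exact inv_pos.mpr hI₁_pos
  have hβ_pos : 0 < β := by rw [hβ]; exact inv_pos.mpr hI₂_pos
  -- bounds on g
  have hg_bound : ∀ r : ℝ, 0 ≤ r → (1:ℝ)/2 ≤ g r := by
    intro r hr
    rw [hg]
    have h1 : (∫ s in (0:ℝ)..(min r R₁), (φ s)⁻¹) ≤ ∫ s in (0:ℝ)..R₁, (φ s)⁻¹ :=
      aux_mono _ hinv_int hinv_nonneg (le_min hr hR₁.le) (min_le_right _ _)
    have h2 : (∫ s in (0:ℝ)..(min r R₂), Φ s / φ s) ≤ ∫ s in (0:ℝ)..R₂, Φ s / φ s :=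
      aux_mono _ hΦφ_int hΦφ_nonneg (le_min hr hR₂.le) (min_le_right _ _)
    have e1 : (ξ / 4) * (∫ s in (0:ℝ)..(min r R₁), (φ s)⁻¹) ≤ 1/4 := by
      calc (ξ / 4) * (∫ s in (0:ℝ)..(min r R₁), (φ s)⁻¹)
          ≤ (ξ / 4) * (∫ s in (0:ℝ)..R₁, (φ s)⁻¹) := by
            apply mul_le_mul_of_nonneg_left h1 (by positivity)
        _ = 1/4 := by rw [hξ, div_mul_eq_mul_div, inv_mul_cancel₀ hI₁_pos.ne']
    have e2 : (β / 4) * (∫ s in (0:ℝ)..(min r R₂), Φ s / φ s) ≤ 1/4 := by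
      calc (β / 4) * (∫ s in (0:ℝ)..(min r R₂), Φ s / φ s)
          ≤ (β / 4) * (∫ s in (0:ℝ)..R₂, Φ s / φ s) := by
            apply mul_le_mul_of_nonneg_left h2 (by positivity)
        _ = 1/4 := by rw [hβ, div_mul_eq_mul_div, inv_mul_cancel₀ hI₂_pos.ne']
    linarith
  have hg_nonneg : ∀ r : ℝ, 0 ≤ r → 0 ≤ g r := fun r hr => by linarith [hg_bound r hr]
  -- continuity of g on Ici 0
  have hP₁_cont : ContinuousOn (fun x => ∫ s in (0:ℝ)..x, (φ s)⁻¹) (Set.Ici 0) :=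
    aux_primitive_contOn _ hinv_int
  have hP₂_cont : ContinuousOn (fun x => ∫ s in (0:ℝ)..x, Φ s / φ s) (Set.Ici 0) :=
    aux_primitive_contOn _ hΦφ_int
  have hgeq : g = fun r => 1 - (ξ / 4) * (∫ s in (0:ℝ)..(min r R₁), (φ s)⁻¹)
      - (β / 4) * (∫ s in (0:ℝ)..(min r R₂), Φ s / φ s) := funext hg
  have hg_cont : ContinuousOn g (Set.Ici 0) := by
    rw [hgeq]
    refine (continuousOn_const.sub (continuousOn_const.mul
      (hP₁_cont.comp (continuous_id.min continuous_const).continuousOn ?_))).sub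
      (continuousOn_const.mul
      (hP₂_cont.comp (continuous_id.min continuous_const).continuousOn ?_))
    · exact fun x hx => le_min hx hR₁.le
    · exact fun x hx => le_min hx hR₂.le
  -- antitonicity of g on Ici 0
  have hg_anti : AntitoneOn g (Set.Ici 0) := by
    intro a ha b hb hab
    rw [hg a, hg b]
    have h1 : (∫ s in (0:ℝ)..(min a R₁), (φ s)⁻¹) ≤ ∫ s in (0:ℝ)..(min b R₁), (φ s)⁻¹ :=
      aux_mono _ hinv_int hinv_nonneg (le_min ha hR₁.le) (min_le_min_right _ hab)
    have h2 : (∫ s in (0:ℝ)..(min a R₂), Φ s / φ s) ≤ ∫ s in (0:ℝ)..(min b R₂), Φ s / φ s :=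
      aux_mono _ hΦφ_int hΦφ_nonneg (le_min ha hR₂.le) (min_le_min_right _ hab)
    have hξ4 : (0:ℝ) ≤ ξ / 4 := by positivity
    have hβ4 : (0:ℝ) ≤ β / 4 := by positivity
    nlinarith
  -- antitonicity of φ on Ici 0
  have hh_mono : MonotoneOn h (Set.Ici 0) := by
    intro a ha b hb hab
    rw [hh a, hh b]
    have h1 : (∫ s in (0:ℝ)..a, s * κ s) ≤ ∫ s in (0:ℝ)..b, s * κ s :=
      aux_mono _ hsk_int hsk_nonneg ha hab
    have h2 : α * M * a ≤ α * M * b :=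
      mul_le_mul_of_nonneg_left hab (mul_nonneg hα hM.le)
    have hσ2' : (0:ℝ) ≤ (σ ^ 2)⁻¹ := by positivity
    exact mul_le_mul_of_nonneg_left (by linarith) hσ2'
  have hφ_anti : AntitoneOn φ (Set.Ici 0) := by
    intro a ha b hb hab
    rw [hφ a, hφ b]
    exact Real.exp_le_exp.mpr (neg_le_neg (hh_mono ha hb hab))
  -- derivative of h and φ
  have hh_deriv : ∀ r : ℝ, 0 < r →
      HasDerivAt h ((σ ^ 2)⁻¹ * (r * κ r / 2 + α * M)) r := by
    intro r hr
    have hIoi : Set.Ioi (0:ℝ) ∈ nhds r := isOpen_Ioi.mem_nhds hr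
    have hFTC : HasDerivAt (fun x => ∫ s in (0:ℝ)..x, s * κ s) (r * κ r) r :=
      intervalIntegral.integral_hasDerivAt_right (hsk_int r hr.le)
        (ContinuousOn.stronglyMeasurableAtFilter isOpen_Ioi hsk_cont r hr)
        (hsk_cont.continuousAt hIoi)
    rw [hheq]
    have := ((hFTC.const_mul ((1:ℝ)/2)).add ((hasDerivAt_id r).const_mul (α * M))).const_mul
      ((σ ^ 2)⁻¹)
    exact this.congr_deriv (by ring)
  have hφ_deriv : ∀ r : ℝ, 0 < r →
      HasDerivAt φ (-((σ ^ 2)⁻¹ * (r * κ r / 2 + α * M)) * φ r) r := by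
    intro r hr
    have hd := ((hh_deriv r hr).neg).exp
    have hv : -((σ ^ 2)⁻¹ * (r * κ r / 2 + α * M)) * φ r
        = Real.exp (-h r) * -((σ ^ 2)⁻¹ * (r * κ r / 2 + α * M)) := by
      rw [hφ]; ring
    rw [hv, hφeq]
    exact hd
  -- F: the untruncated primitive
  set F : ℝ → ℝ := fun x => ∫ s in (0:ℝ)..x, φ s * g s with hFdef
  have hφg_cont : ContinuousOn (fun s => φ s * g s) (Set.Ici 0) := hφ_cont.mul hg_cont
  have hφg_int : ∀ b : ℝ, 0 ≤ b → IntervalIntegrable (fun s => φ s * g s) volume 0 b := by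
    intro b hb
    refine (hφg_cont.mono ?_).intervalIntegrable
    rw [Set.uIcc_of_le hb]; exact Set.Icc_subset_Ici_self
  have hφg_nonneg : ∀ s : ℝ, 0 < s → 0 ≤ φ s * g s :=
    fun s hs => mul_nonneg (hφpos s).le (hg_nonneg s hs.le)
  have hF_deriv : ∀ r : ℝ, 0 < r → HasDerivAt F (φ r * g r) r :=
    fun r hr => aux_ftc _ hφg_cont hr
  have hfF : ∀ r, f r = F (min r R₂) := fun r => hf r
  -- f agrees with F near points of (0, R₂)
  have hf_ev : ∀ r : ℝ, r < R₂ → f =ᶠ[nhds r] F := by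
    intro r hrR₂
    filter_upwards [isOpen_Iio.mem_nhds (show r ∈ Set.Iio R₂ from hrR₂)] with x hx
    rw [hfF, min_eq_left (le_of_lt hx)]
  have hf_hasDeriv : ∀ r : ℝ, 0 < r → r < R₂ → HasDerivAt f (φ r * g r) r :=
    fun r hr hrR₂ => (hF_deriv r hr).congr_of_eventuallyEq (hf_ev r hrR₂)
  have hderivf : ∀ r : ℝ, 0 < r → r < R₂ → deriv f r = φ r * g r :=
    fun r hr hrR₂ => (hf_hasDeriv r hr hrR₂).deriv
  -- f is constant past R₂
  have hf_const : ∀ r : ℝ, R₂ < r → f =ᶠ[nhds r] fun _ => F R₂ := by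
    intro r hrR₂
    filter_upwards [isOpen_Ioi.mem_nhds (show r ∈ Set.Ioi R₂ from hrR₂)] with x hx
    rw [hfF, min_eq_right (le_of_lt hx)]
  have hf_hasDeriv' : ∀ r : ℝ, R₂ < r → HasDerivAt f 0 r :=
    fun r hrR₂ => (hasDerivAt_const r (F R₂)).congr_of_eventuallyEq (hf_const r hrR₂)
  have hderivf' : ∀ r : ℝ, R₂ < r → deriv f r = 0 :=
    fun r hrR₂ => (hf_hasDeriv' r hrR₂).deriv
  constructor
  · -- pointwise second-derivative statement
    intro r hr hne₁ hne₂
    rcases lt_or_gt_of_ne hne₂ with hrlt | hrgt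
    · -- r < R₂
      have hdf := hf_hasDeriv r hr hrlt
      have hdfr : deriv f r = φ r * g r := hderivf r hr hrlt
      have hderiv_ev : deriv f =ᶠ[nhds r] fun x => φ x * g x := by
        filter_upwards [isOpen_Ioo.mem_nhds (show r ∈ Set.Ioo 0 R₂ from ⟨hr, hrlt⟩)] with x hx
        exact hderivf x hx.1 hx.2
      -- derivative of g at r
      have hg_hasDeriv : HasDerivAt g
          (-(ξ / 4) * (φ r)⁻¹ * (if r < R₁ then (1:ℝ) else 0) - (β / 4) * (Φ r / φ r)) r := by
        rcases lt_or_gt_of_ne hne₁ with hr₁ | hr₁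
        · -- r < R₁
          rw [if_pos hr₁]
          have hev : g =ᶠ[nhds r] fun x =>
              1 - (ξ / 4) * (∫ s in (0:ℝ)..x, (φ s)⁻¹)
                - (β / 4) * (∫ s in (0:ℝ)..x, Φ s / φ s) := by
            filter_upwards [isOpen_Iio.mem_nhds (show r ∈ Set.Iio R₁ from hr₁)] with x hx
            rw [hg, min_eq_left (le_of_lt hx), min_eq_left (le_of_lt (lt_of_lt_of_le hx hR₁₂))]
          have hd : HasDerivAt (fun x =>
              1 - (ξ / 4) * (∫ s in (0:ℝ)..x, (φ s)⁻¹)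
                - (β / 4) * (∫ s in (0:ℝ)..x, Φ s / φ s))
              (0 - (ξ / 4) * (φ r)⁻¹ - (β / 4) * (Φ r / φ r)) r := by
            exact ((hasDerivAt_const r (1:ℝ)).sub
              ((aux_ftc _ hinv_cont hr).const_mul (ξ/4))).sub
              ((aux_ftc _ hΦφ_cont hr).const_mul (β/4))
          have := hd.congr_of_eventuallyEq hev
          exact this.congr_deriv (by ring)
        · -- R₁ < r
          rw [if_neg (not_lt.mpr hr₁.le)]
          have hev : g =ᶠ[nhds r] fun x =>
              1 - (ξ / 4) * (∫ s in (0:ℝ)..R₁, (φ s)⁻¹)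
                - (β / 4) * (∫ s in (0:ℝ)..x, Φ s / φ s) := by
            filter_upwards [(isOpen_Ioi.inter isOpen_Iio).mem_nhds
              (show r ∈ Set.Ioi R₁ ∩ Set.Iio R₂ from ⟨hr₁, hrlt⟩)] with x hx
            rw [hg, min_eq_right (le_of_lt hx.1), min_eq_left (le_of_lt hx.2)]
          have hd : HasDerivAt (fun x =>
              1 - (ξ / 4) * (∫ s in (0:ℝ)..R₁, (φ s)⁻¹)
                - (β / 4) * (∫ s in (0:ℝ)..x, Φ s / φ s))
              (0 - (β / 4) * (Φ r / φ r)) r := by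
            exact (hasDerivAt_const r _).sub ((aux_ftc _ hΦφ_cont hr).const_mul (β/4))
          have := hd.congr_of_eventuallyEq hev
          exact this.congr_deriv (by ring)
      -- product rule
      have hprod : HasDerivAt (fun x => φ x * g x)
          (-((σ ^ 2)⁻¹ * (r * κ r / 2 + α * M)) * φ r * g r
            + φ r * (-(ξ / 4) * (φ r)⁻¹ * (if r < R₁ then (1:ℝ) else 0)
              - (β / 4) * (Φ r / φ r))) r :=
        (hφ_deriv r hr).mul hg_hasDeriv
      have hsecond : HasDerivAt (deriv f)
          (-((σ ^ 2)⁻¹ * (r * κ r / 2 + α * M)) * φ r * g r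
            + φ r * (-(ξ / 4) * (φ r)⁻¹ * (if r < R₁ then (1:ℝ) else 0)
              - (β / 4) * (Φ r / φ r))) r :=
        hprod.congr_of_eventuallyEq hderiv_ev
      have hval : -((σ ^ 2)⁻¹ * (r * κ r / 2 + α * M)) * φ r * g r
            + φ r * (-(ξ / 4) * (φ r)⁻¹ * (if r < R₁ then (1:ℝ) else 0)
              - (β / 4) * (Φ r / φ r))
          = -((σ ^ 2)⁻¹ * (r * κ r / 2 + α * M)) * deriv f r
            - (ξ / 4) * (if r < R₁ then (1:ℝ) else 0)
            - (β / 4) * Φ r * (if r < R₂ then (1:ℝ) else 0) := by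
        rw [hdfr, if_pos hrlt]
        have hφne : φ r ≠ 0 := (hφpos r).ne'
        by_cases h₁ : r < R₁
        · rw [if_pos h₁]; field_simp; ring
        · rw [if_neg h₁]; field_simp; ring
      refine ⟨hdf.differentiableAt, ?_, ?_⟩
      · rw [← hval]; exact hsecond
      · -- nonpositivity
        rw [hdfr]
        have hκr := hκ_nonneg r hr
        have hrκ : 0 ≤ r * κ r / 2 := by positivity
        have hDpos : 0 ≤ (σ ^ 2)⁻¹ * (r * κ r / 2 + α * M) := by positivity
        have h1 : 0 ≤ φ r * g r := mul_nonneg (hφpos r).le (hg_nonneg r hr.le)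
        have h2 : 0 ≤ Φ r := hΦ_nonneg r hr.le
        have h3 : 0 ≤ (σ ^ 2)⁻¹ * (r * κ r / 2 + α * M) * (φ r * g r) :=
          mul_nonneg hDpos h1
        have h4 : 0 ≤ β / 4 * Φ r := mul_nonneg (by positivity) h2
        have h5 : 0 ≤ ξ / 4 := by positivity
        split_ifs <;> nlinarith [h3, h4, h5]
    · -- R₂ < r
      have hdf := hf_hasDeriv' r hrgt
      have hdfr : deriv f r = 0 := hderivf' r hrgt
      have hderiv_ev : deriv f =ᶠ[nhds r] fun _ => (0:ℝ) := by
        filter_upwards [isOpen_Ioi.mem_nhds (show r ∈ Set.Ioi R₂ from hrgt)] with x hx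
        exact hderivf' x hx
      have hsecond : HasDerivAt (deriv f) 0 r :=
        (hasDerivAt_const r (0:ℝ)).congr_of_eventuallyEq hderiv_ev
      have hn₁ : ¬ r < R₁ := not_lt.mpr (le_of_lt (lt_of_le_of_lt hR₁₂ hrgt))
      have hn₂ : ¬ r < R₂ := not_lt.mpr hrgt.le
      refine ⟨hdf.differentiableAt, ?_, ?_⟩
      · rw [if_neg hn₁, if_neg hn₂, hdfr]
        convert hsecond using 1
        ring
      · rw [if_neg hn₁, if_neg hn₂, hdfr]
        simp
  · -- concavity
    have hF_cont : ContinuousOn F (Set.Ici 0) := aux_primitive_contOn _ hφg_int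
    have hF_diff : DifferentiableOn ℝ F (interior (Set.Ici (0:ℝ))) := by
      rw [interior_Ici]
      exact fun x hx => ((hF_deriv x hx).differentiableAt).differentiableWithinAt
    have hF_anti : AntitoneOn (deriv F) (interior (Set.Ici (0:ℝ))) := by
      rw [interior_Ici]
      intro a ha b hb hab
      rw [(hF_deriv a ha).deriv, (hF_deriv b hb).deriv]
      exact mul_le_mul (hφ_anti (Set.mem_Ici.mpr (le_of_lt ha)) (Set.mem_Ici.mpr (le_of_lt (lt_of_lt_of_le ha hab))) hab)
        (hg_anti (Set.mem_Ici.mpr (le_of_lt ha)) (Set.mem_Ici.mpr (le_of_lt (lt_of_lt_of_le ha hab))) hab)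
        (hg_nonneg b (le_of_lt (lt_of_lt_of_le ha hab))) (hφpos a).le
    have hF_conc : ConcaveOn ℝ (Set.Ici 0) F :=
      hF_anti.concaveOn_of_deriv (convex_Ici 0) hF_cont hF_diff
    have hmin : ConcaveOn ℝ (Set.Ici 0) (F ⊓ fun _ => F R₂) :=
      hF_conc.inf (concaveOn_const _ (convex_Ici 0))
    have heq : ∀ x ∈ Set.Ici (0:ℝ), f x = min (F x) (F R₂) := by
      intro x hx
      rcases le_total x R₂ with hxR | hxR
      · rw [hfF, min_eq_left hxR, min_eq_left]
        exact aux_mono _ hφg_int hφg_nonneg hx hxR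
      · rw [hfF, min_eq_right hxR, min_eq_right]
        exact aux_mono _ hφg_int hφg_nonneg hR₂.le hxR
    refine ⟨convex_Ici 0, fun x hx y hy a b ha hb hab => ?_⟩
    rw [heq x hx, heq y hy, heq _ ((convex_Ici 0) hx hy ha hb hab)]
    exact hmin.2 hx hy ha hb hab
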